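/- If 1 < p < ∞, ω ∈ A_p(ℤ), and x ∈ l^p_∞(ω), then the discrete (unweighted) Hardy–Littlewood maximal function Mx is a bounded sequence, with ‖Mx‖_{l^∞} ≤ C‖x‖_{l^p_∞(ω)}. -/
import Mathlib


open Finset MeasureTheory
open scoped Classical

noncomputable section

/-- The symmetric interval `S_{m,N} = {k : |k - m| ≤ N}` as a finite set. -/
def Sint (m : ℤ) (N : ℕ) : Finset ℤ := Finset.Icc (m - N) (m + N)

/-- `w(S) = Σ_{k ∈ S} w(k)`. -/
def wSum (w : ℤ → ℝ) (s : Finset ℤ) : ℝ := ∑ k ∈ s, w k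

/-- Discrete weighted Morrey norm `‖x‖_{l^p_q(w,v)}`. -/
def morreyNorm (p q : ℝ) (w v : ℤ → ℝ) (x : ℤ → ℝ) : ℝ :=
  ⨆ mN : ℤ × ℕ, (wSum v (Sint mN.1 mN.2)) ^ (1/q - 1/p) *
    (∑ k ∈ Sint mN.1 mN.2, |x k| ^ p * w k) ^ (1/p)

/-- The discrete Muckenhoupt class `A₁(ℤ)`. -/
def discreteA1 (w : ℤ → ℝ) : Prop :=
  ∃ C : ℝ, ∀ a b : ℤ, (hab : a ≤ b) →
    ((Finset.Icc a b).card : ℝ)⁻¹ * (∑ k ∈ Finset.Icc a b, w k) ≤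
      C * (Finset.Icc a b).inf' (Finset.nonempty_Icc.mpr hab) w

/-- The discrete Muckenhoupt class `A_p(ℤ)` for `1 < p < ∞`. -/
def discreteAp (p : ℝ) (w : ℤ → ℝ) : Prop :=
  ∃ C : ℝ, ∀ a b : ℤ, a ≤ b →
    (((Finset.Icc a b).card : ℝ)⁻¹ * ∑ k ∈ Finset.Icc a b, w k) *
      (((Finset.Icc a b).card : ℝ)⁻¹ *
        ∑ k ∈ Finset.Icc a b, (w k) ^ (-(p-1)⁻¹)) ^ (p-1) ≤ C

/-- The discrete weighted Hardy–Littlewood maximal operator `M_w`. -/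
def maxW (w x : ℤ → ℝ) (m : ℤ) : ℝ :=
  ⨆ N : ℕ, (wSum w (Sint m N))⁻¹ * ∑ k ∈ Sint m N, |x k| * w k

/-- The discrete (unweighted) Hardy–Littlewood maximal operator `M`. -/
def maxHL (x : ℤ → ℝ) (m : ℤ) : ℝ :=
  ⨆ N : ℕ, ((2 * N + 1 : ℕ) : ℝ)⁻¹ * ∑ k ∈ Sint m N, |x k|

/-- Discrete weighted Morrey norm with `q = ∞`. -/
def morreyInfNorm (p : ℝ) (w : ℤ → ℝ) (x : ℤ → ℝ) : ℝ :=
  ⨆ mN : ℤ × ℕ, (wSum w (Sint mN.1 mN.2)) ^ (-(1/p)) *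
    (∑ k ∈ Sint mN.1 mN.2, |x k| ^ p * w k) ^ (1/p)

section Aux

lemma Sint_card (m : ℤ) (N : ℕ) : (Sint m N).card = 2 * N + 1 := by
  rw [Sint, Int.card_Icc]
  omega

lemma Sint_nonempty (m : ℤ) (N : ℕ) : (Sint m N).Nonempty :=
  Finset.nonempty_Icc.mpr (by omega)

end Aux

/-- `(l^p_∞(w), l^∞)`-boundedness of the discrete maximal operator. -/
theorem stmt15 (p : ℝ) (hp : 1 < p) (w : ℤ → ℝ) (hw : ∀ k, 0 < w k)
    (hAp : discreteAp p w) :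
    ∃ C > 0, ∀ x : ℤ → ℝ,
      BddAbove (Set.range fun mN : ℤ × ℕ =>
        (wSum w (Sint mN.1 mN.2)) ^ (-(1/p)) *
          (∑ k ∈ Sint mN.1 mN.2, |x k| ^ p * w k) ^ (1/p)) →
      ∀ m : ℤ, maxHL x m ≤ C * morreyInfNorm p w x := by
  obtain ⟨C0, hC0⟩ := hAp
  have hp0 : (0:ℝ) < p := lt_trans one_pos hp
  have hp1 : (0:ℝ) < p - 1 := sub_pos.mpr hp
  set q : ℝ := p / (p - 1) with hq
  have hpq : p.HolderConjugate q := Real.HolderConjugate.conjExponent hp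
  -- C0 is positive
  have hC0pos : 0 < C0 := by
    have h00 := hC0 0 0 le_rfl
    simp only [Finset.Icc_self, Finset.card_singleton, Nat.cast_one, inv_one,
      Finset.sum_singleton, one_mul] at h00
    have : 0 < w 0 * (w 0 ^ (-(p-1)⁻¹)) ^ (p - 1) :=
      mul_pos (hw 0) (Real.rpow_pos_of_pos (Real.rpow_pos_of_pos (hw 0) _) _)
    linarith
  refine ⟨C0 ^ (1/p), Real.rpow_pos_of_pos hC0pos _, fun x hbdd m => ?_⟩
  set nrm := morreyInfNorm p w x with hnrm
  -- each Morrey term is ≤ nrm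
  have hterm : ∀ mN : ℤ × ℕ,
      (wSum w (Sint mN.1 mN.2)) ^ (-(1/p)) *
        (∑ k ∈ Sint mN.1 mN.2, |x k| ^ p * w k) ^ (1/p) ≤ nrm := fun mN =>
    le_ciSup hbdd mN
  have htermnn : ∀ mN : ℤ × ℕ, (0:ℝ) ≤
      (wSum w (Sint mN.1 mN.2)) ^ (-(1/p)) *
        (∑ k ∈ Sint mN.1 mN.2, |x k| ^ p * w k) ^ (1/p) := fun mN => by
    apply mul_nonneg (Real.rpow_nonneg ?_ _) (Real.rpow_nonneg ?_ _)
    · exact Finset.sum_nonneg fun k _ => (hw k).le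
    · exact Finset.sum_nonneg fun k _ =>
        mul_nonneg (Real.rpow_nonneg (abs_nonneg _) _) (hw k).le
  have hnrm0 : 0 ≤ nrm := le_trans (htermnn (m, 0)) (hterm (m, 0))
  have hgoalnn : 0 ≤ C0 ^ (1/p) * nrm :=
    mul_nonneg (Real.rpow_nonneg hC0pos.le _) hnrm0
  rw [maxHL]
  apply Real.iSup_le _ hgoalnn
  intro N
  set S := Sint m N with hS
  set n : ℝ := ((2 * N + 1 : ℕ) : ℝ) with hn
  have hnpos : (0:ℝ) < n := by positivity
  set W : ℝ := ∑ k ∈ S, w k with hW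
  have hWpos : 0 < W := Finset.sum_pos (fun k _ => hw k) (Sint_nonempty m N)
  set σ : ℝ := ∑ k ∈ S, w k ^ (-(p-1)⁻¹) with hσ
  have hσpos : 0 < σ :=
    Finset.sum_pos (fun k _ => Real.rpow_pos_of_pos (hw k) _) (Sint_nonempty m N)
  set A : ℝ := ∑ k ∈ S, |x k| ^ p * w k with hA
  have hAnn : 0 ≤ A := Finset.sum_nonneg fun k _ =>
    mul_nonneg (Real.rpow_nonneg (abs_nonneg _) _) (hw k).le
  -- Hölder
  have holder : ∑ k ∈ S, |x k| ≤ A ^ (1/p) * σ ^ (1/q) := by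
    have h1 : ∀ k ∈ S, |x k| = (|x k| * w k ^ (1/p)) * w k ^ (-(1/p)) := by
      intro k _
      rw [mul_assoc, ← Real.rpow_add (hw k)]
      simp
    rw [Finset.sum_congr rfl h1]
    have h2 := Real.inner_le_Lp_mul_Lq_of_nonneg S hpq
      (f := fun k => |x k| * w k ^ (1/p)) (g := fun k => w k ^ (-(1/p)))
      (fun k _ => mul_nonneg (abs_nonneg _) (Real.rpow_nonneg (hw k).le _))
      (fun k _ => Real.rpow_nonneg (hw k).le _)
    refine h2.trans (le_of_eq ?_)
    congr 1
    · congr 1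
      apply Finset.sum_congr rfl
      intro k _
      rw [Real.mul_rpow (abs_nonneg _) (Real.rpow_nonneg (hw k).le _),
        ← Real.rpow_mul (hw k).le, one_div, inv_mul_cancel₀ hp0.ne', Real.rpow_one]
    · congr 1
      apply Finset.sum_congr rfl
      intro k _
      rw [← Real.rpow_mul (hw k).le]
      congr 1
      rw [hq]
      field_simp
  -- A^(1/p) ≤ W^(1/p) * nrm
  have hAbd : A ^ (1/p) ≤ W ^ (1/p) * nrm := by
    have := hterm (m, N)
    have hWr : (wSum w (Sint m N)) = W := rfl
    have h3 : W ^ (1/p) * (W ^ (-(1/p)) * A ^ (1/p)) = A ^ (1/p) := by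
      rw [← mul_assoc, ← Real.rpow_add hWpos, add_neg_cancel, Real.rpow_zero, one_mul]
    calc A ^ (1/p) = W ^ (1/p) * (W ^ (-(1/p)) * A ^ (1/p)) := h3.symm
      _ ≤ W ^ (1/p) * nrm := by
          exact mul_le_mul_of_nonneg_left this (Real.rpow_nonneg hWpos.le _)
  -- Ap bound: n⁻¹ * (W^(1/p) * σ^(1/q)) ≤ C0^(1/p)
  have hApN : n⁻¹ * (W ^ (1/p) * σ ^ (1/q)) ≤ C0 ^ (1/p) := by
    have hAp' := hC0 (m - N) (m + N) (by omega)
    have hcard : (((Finset.Icc (m - (N:ℤ)) (m + N)).card : ℝ)) = n := by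
      rw [show Finset.Icc (m - (N:ℤ)) (m + N) = S from rfl, Sint_card]
    rw [hcard] at hAp'
    have hLHS : (n⁻¹ * W) * (n⁻¹ * σ) ^ (p - 1) ≤ C0 := hAp'
    have hbase : 0 ≤ (n⁻¹ * W) * (n⁻¹ * σ) ^ (p - 1) := by positivity
    have := Real.rpow_le_rpow hbase hLHS (by positivity : (0:ℝ) ≤ 1/p)
    refine le_trans (le_of_eq ?_) this
    rw [Real.mul_rpow (by positivity) (by positivity),
      Real.mul_rpow (by positivity : (0:ℝ) ≤ n⁻¹) hWpos.le,
      ← Real.rpow_mul (by positivity : (0:ℝ) ≤ n⁻¹ * σ),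
      Real.mul_rpow (by positivity : (0:ℝ) ≤ n⁻¹) hσpos.le]
    have e1 : (p - 1) * (1/p) = 1/q := by rw [hq, one_div_div]; ring
    rw [e1]
    have e2 : n⁻¹ ^ (1/p) * (n⁻¹ ^ (1/q)) = n⁻¹ := by
      rw [← Real.rpow_add (by positivity),
        show (1/p + 1/q : ℝ) = 1 by rw [one_div, one_div, hpq.inv_add_inv_eq_one],
        Real.rpow_one]
    calc n⁻¹ * (W ^ (1/p) * σ ^ (1/q))
        = (n⁻¹ ^ (1/p) * n⁻¹ ^ (1/q)) * (W ^ (1/p) * σ ^ (1/q)) := by rw [e2]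
      _ = n⁻¹ ^ (1/p) * W ^ (1/p) * (n⁻¹ ^ (1/q) * σ ^ (1/q)) := by ring
  -- combine
  calc n⁻¹ * ∑ k ∈ S, |x k|
      ≤ n⁻¹ * (A ^ (1/p) * σ ^ (1/q)) := by
        exact mul_le_mul_of_nonneg_left holder (by positivity)
    _ ≤ n⁻¹ * (W ^ (1/p) * nrm * σ ^ (1/q)) := by
        apply mul_le_mul_of_nonneg_left _ (by positivity)
        exact mul_le_mul_of_nonneg_right hAbd (Real.rpow_nonneg hσpos.le _)
    _ = (n⁻¹ * (W ^ (1/p) * σ ^ (1/q))) * nrm := by ring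
    _ ≤ C0 ^ (1/p) * nrm := mul_le_mul_of_nonneg_right hApN hnrm0
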